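/- arXiv:2305.06855 — 2 statements merged into one kernel-verified Lean document; each statement's English description precedes it below -/
import Mathlib

section
/- MED does not imply weak monotonicity: there exists λ ∈ (0,1) such that the two-qubit state ρ_λ = λ|ψ⁻⟩⟨ψ⁻| + (1−λ)𝟙/4 satisfies −1/2 ≤ S(2|1)_{ρ_λ} < 0. Consequently, assigning ρ_{ij} = ρ_λ to every pair ij of three sites yields a pairwise locally consistent family that violates every weak monotonicity inequality S(i|j) + S(i|k) ≥ 0 for distinct i,j,k ∈ {1,2,3}, while satisfying all 2-body MED inequalities: S(i) + S(j|i) + S(k|j) ≥ 0 and S(i) + S(j|i) + S(k|i) ≥ 0 for all distinct i,j,k ∈ {1,2,3}. -/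
open scoped Matrix Kronecker ComplexOrder

noncomputable section

def IsDensityOp {n : Type*} [Fintype n] [DecidableEq n] (ρ : Matrix n n ℂ) : Prop :=
  ρ.PosSemidef ∧ ρ.trace = 1

/-- Von Neumann entropy of a (Hermitian) matrix: `-∑ λᵢ log λᵢ`. -/
noncomputable def vNE {n : Type*} [Fintype n] [DecidableEq n] (ρ : Matrix n n ℂ) : ℝ :=
  if h : ρ.IsHermitian then -∑ i, h.eigenvalues i * Real.log (h.eigenvalues i) else 0

/-- Partial trace over the first tensor factor. -/
noncomputable def ptraceL {a b : Type*} [Fintype a] [Fintype b]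
    (ρ : Matrix (a × b) (a × b) ℂ) : Matrix b b ℂ :=
  Matrix.of fun i j => ∑ k : a, ρ (k, i) (k, j)

/-- Partial trace over the second tensor factor. -/
noncomputable def ptraceR {a b : Type*} [Fintype a] [Fintype b]
    (ρ : Matrix (a × b) (a × b) ℂ) : Matrix a a ℂ :=
  Matrix.of fun i j => ∑ k : b, ρ (i, k) (j, k)

end
noncomputable section

/-- The two-qubit singlet state `|ψ⁻⟩ = (|01⟩ - |10⟩)/√2`. -/
noncomputable def psiMinus : Fin 2 × Fin 2 → ℂ :=
  fun p => if p = (0, 1) then (Real.sqrt 2 : ℂ)⁻¹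
    else if p = (1, 0) then -(Real.sqrt 2 : ℂ)⁻¹ else 0

/-- The rank-one projector `|ψ⁻⟩⟨ψ⁻|` onto the singlet state. -/
noncomputable def singletProj : Matrix (Fin 2 × Fin 2) (Fin 2 × Fin 2) ℂ :=
  Matrix.of fun p q => psiMinus p * (starRingEnd ℂ) (psiMinus q)

/-- `ρ_λ = λ|ψ⁻⟩⟨ψ⁻| + (1-λ)𝟙/4`. -/
noncomputable def rhoLam (lam : ℝ) : Matrix (Fin 2 × Fin 2) (Fin 2 × Fin 2) ℂ :=
  (lam : ℂ) • singletProj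
    + ((1 - lam : ℝ) : ℂ) • ((1 / 4 : ℂ) • (1 : Matrix (Fin 2 × Fin 2) (Fin 2 × Fin 2) ℂ))


/-! ### Auxiliary lemmas -/

section Aux
variable {n : Type*} [Fintype n] [DecidableEq n]

lemma eig_quad {A : Matrix n n ℂ} (hA : A.IsHermitian) (a b : ℝ)
    (h : (A - (a : ℂ) • 1) * (A - (b : ℂ) • 1) = 0) (i : n) :
    hA.eigenvalues i = a ∨ hA.eigenvalues i = b := by
  set U := (hA.eigenvectorUnitary : Matrix n n ℂ) with hUdef
  have hU1 : star U * U = 1 := Matrix.mem_unitaryGroup_iff'.mp hA.eigenvectorUnitary.2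
  have hU2 : U * star U = 1 := Matrix.mem_unitaryGroup_iff.mp hA.eigenvectorUnitary.2
  have hD : star U * A * U = Matrix.diagonal (RCLike.ofReal ∘ hA.eigenvalues) := by
    have := hA.conjStarAlgAut_star_eigenvectorUnitary
    rwa [Unitary.conjStarAlgAut_star_apply] at this
  set d : n → ℂ := RCLike.ofReal ∘ hA.eigenvalues with hd
  have key : (Matrix.diagonal d - (a:ℂ) • 1) * (Matrix.diagonal d - (b:ℂ) • 1) = 0 := by
    have h1 : Matrix.diagonal d - (a:ℂ) • 1 = star U * (A - (a:ℂ) • 1) * U := by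
      rw [Matrix.mul_sub, Matrix.sub_mul, hD]
      simp [Matrix.mul_smul, Matrix.smul_mul, hU1]
    have h2 : Matrix.diagonal d - (b:ℂ) • 1 = star U * (A - (b:ℂ) • 1) * U := by
      rw [Matrix.mul_sub, Matrix.sub_mul, hD]
      simp [Matrix.mul_smul, Matrix.smul_mul, hU1]
    rw [h1, h2]
    calc star U * (A - (a:ℂ) • 1) * U * (star U * (A - (b:ℂ) • 1) * U)
        = star U * (A - (a:ℂ) • 1) * (U * star U) * ((A - (b:ℂ) • 1) * U) := by
          noncomm_ring
      _ = star U * ((A - (a:ℂ) • 1) * (A - (b:ℂ) • 1)) * U := by rw [hU2]; noncomm_ring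
      _ = 0 := by rw [h]; simp
  have : (d i - a) * (d i - b) = 0 := by
    have := congrFun (congrFun key i) i
    simpa [Matrix.mul_apply, Matrix.sub_apply, Matrix.smul_apply, Matrix.diagonal_apply,
      Matrix.one_apply, Finset.sum_ite_eq', sub_mul, mul_sub] using this
  rcases mul_eq_zero.mp this with h' | h'
  · left
    have : (hA.eigenvalues i : ℂ) = a := by simpa [hd, sub_eq_zero] using h'
    exact_mod_cast this
  · right
    have : (hA.eigenvalues i : ℂ) = b := by simpa [hd, sub_eq_zero] using h'
    exact_mod_cast this

lemma trace_eq_sum_eig {A : Matrix n n ℂ} (hA : A.IsHermitian) :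
    A.trace = ∑ i, (hA.eigenvalues i : ℂ) := by
  have hD : star (hA.eigenvectorUnitary : Matrix n n ℂ) * A * (hA.eigenvectorUnitary : Matrix n n ℂ)
      = Matrix.diagonal (RCLike.ofReal ∘ hA.eigenvalues) := by
    have := hA.conjStarAlgAut_star_eigenvectorUnitary
    rwa [Unitary.conjStarAlgAut_star_apply] at this
  have hU2 : (hA.eigenvectorUnitary : Matrix n n ℂ)
      * star (hA.eigenvectorUnitary : Matrix n n ℂ) = 1 :=
    Matrix.mem_unitaryGroup_iff.mp hA.eigenvectorUnitary.2
  have := congrArg Matrix.trace hD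
  rw [Matrix.trace_mul_cycle, hU2, one_mul] at this
  simpa [Matrix.trace_diagonal] using this

lemma psd_smul_real {M : Matrix n n ℂ}
    (hM : M.PosSemidef) {r : ℝ} (hr : 0 ≤ r) : ((r : ℂ) • M).PosSemidef := by
  constructor
  · unfold Matrix.IsHermitian
    rw [Matrix.conjTranspose_smul, hM.1.eq]
    simp [Complex.conj_ofReal]
  · exact (Matrix.PosSemidef.of_dotProduct_mulVec_nonneg (M := (r : ℂ) • M)
      (by unfold Matrix.IsHermitian; rw [Matrix.conjTranspose_smul, hM.1.eq]; simp [Complex.conj_ofReal])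
      fun x => by
        rw [Matrix.smul_mulVec, dotProduct_smul]
        exact mul_nonneg (by exact_mod_cast hr) (hM.dotProduct_mulVec_nonneg x)).2

end Aux

lemma sq2' : ((Real.sqrt 2 : ℂ))⁻¹ * ((Real.sqrt 2 : ℂ))⁻¹ = 1/2 := by
  rw [← mul_inv]; norm_cast
  rw [Real.mul_self_sqrt (by norm_num)]; norm_num

lemma psi_norm : ∑ r : Fin 2 × Fin 2, (starRingEnd ℂ) (psiMinus r) * psiMinus r = 1 := by
  rw [Fintype.sum_prod_type]
  simp [Fin.sum_univ_two, psiMinus, Prod.ext_iff, map_inv₀, map_neg, Complex.conj_ofReal]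
  rw [sq2']; ring

lemma proj_sq : singletProj * singletProj = singletProj := by
  ext p q
  simp only [Matrix.mul_apply, singletProj, Matrix.of_apply]
  calc ∑ r, psiMinus p * (starRingEnd ℂ) (psiMinus r) * (psiMinus r * (starRingEnd ℂ) (psiMinus q))
      = (psiMinus p * (starRingEnd ℂ) (psiMinus q)) *
          ∑ r, (starRingEnd ℂ) (psiMinus r) * psiMinus r := by
        rw [Finset.mul_sum]; apply Finset.sum_congr rfl; intros; ring
    _ = _ := by rw [psi_norm, mul_one]

lemma proj_trace : singletProj.trace = 1 := by
  simp only [Matrix.trace, Matrix.diag, singletProj, Matrix.of_apply]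
  calc ∑ r : Fin 2 × Fin 2, psiMinus r * (starRingEnd ℂ) (psiMinus r)
      = ∑ r : Fin 2 × Fin 2, (starRingEnd ℂ) (psiMinus r) * psiMinus r := by
        apply Finset.sum_congr rfl; intros; ring
    _ = 1 := psi_norm

lemma proj_psd : singletProj.PosSemidef := by
  have := Matrix.posSemidef_conjTranspose_mul_self
    (Matrix.of (fun (_ : Fin 1) q => (starRingEnd ℂ) (psiMinus q)))
  convert this using 1
  ext p q
  simp [Matrix.mul_apply, Matrix.conjTranspose_apply, singletProj, mul_comm]

lemma rho_psd : (rhoLam (4/5)).PosSemidef := by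
  have h1 : ((4/5 : ℝ) : ℂ) • singletProj |>.PosSemidef := psd_smul_real proj_psd (by norm_num)
  have h2 : ((1/4 : ℝ) : ℂ) • (1 : Matrix (Fin 2 × Fin 2) (Fin 2 × Fin 2) ℂ) |>.PosSemidef :=
    psd_smul_real Matrix.PosSemidef.one (by norm_num)
  have h3 := psd_smul_real h2 (r := (1 - 4/5 : ℝ)) (by norm_num)
  have := h1.add h3
  unfold rhoLam
  convert this using 2 <;> push_cast <;> norm_num

lemma rho_trace : (rhoLam (4/5)).trace = 1 := by
  unfold rhoLam
  simp only [Matrix.trace_add, Matrix.trace_smul, proj_trace, Matrix.trace_one]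
  norm_num [Fintype.card_prod]

lemma rho_quad : (rhoLam (4/5) - ((17/20 : ℝ) : ℂ) • 1) * (rhoLam (4/5) - ((1/20 : ℝ) : ℂ) • 1)
    = 0 := by
  have h1 : rhoLam (4/5) - ((17/20 : ℝ) : ℂ) • 1 = (4/5 : ℂ) • (singletProj - 1) := by
    unfold rhoLam
    push_cast
    ext p q
    simp only [Matrix.sub_apply, Matrix.add_apply, Matrix.smul_apply, smul_eq_mul]
    ring
  have h2 : rhoLam (4/5) - ((1/20 : ℝ) : ℂ) • 1 = (4/5 : ℂ) • singletProj := by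
    unfold rhoLam
    push_cast
    ext p q
    simp only [Matrix.sub_apply, Matrix.add_apply, Matrix.smul_apply, smul_eq_mul]
    ring
  rw [h1, h2, Matrix.smul_mul, Matrix.mul_smul, Matrix.sub_mul, one_mul, proj_sq, sub_self]
  simp

lemma ptR : ptraceR (rhoLam (4/5)) = ((1/2 : ℝ) : ℂ) • (1 : Matrix (Fin 2) (Fin 2) ℂ) := by
  ext i j
  simp only [ptraceR, rhoLam, Matrix.of_apply, Matrix.add_apply, Matrix.smul_apply,
    singletProj, Fin.sum_univ_two]
  fin_cases i <;> fin_cases j <;>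
    simp [psiMinus, Prod.ext_iff, Matrix.one_apply, Complex.conj_ofReal, map_inv₀, sq2'] <;>
    norm_num

lemma ptL : ptraceL (rhoLam (4/5)) = ((1/2 : ℝ) : ℂ) • (1 : Matrix (Fin 2) (Fin 2) ℂ) := by
  ext i j
  simp only [ptraceL, rhoLam, Matrix.of_apply, Matrix.add_apply, Matrix.smul_apply,
    singletProj, Fin.sum_univ_two]
  fin_cases i <;> fin_cases j <;>
    simp [psiMinus, Prod.ext_iff, Matrix.one_apply, Complex.conj_ofReal, map_inv₀, sq2'] <;>
    norm_num

lemma half_one_herm : (((1/2 : ℝ) : ℂ) • (1 : Matrix (Fin 2) (Fin 2) ℂ)).IsHermitian := by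
  unfold Matrix.IsHermitian
  rw [Matrix.conjTranspose_smul, Matrix.conjTranspose_one]
  simp [Complex.conj_ofReal]

lemma vNE_half_one : vNE (((1/2 : ℝ) : ℂ) • (1 : Matrix (Fin 2) (Fin 2) ℂ)) = Real.log 2 := by
  rw [vNE, dif_pos half_one_herm]
  have heig : ∀ i, half_one_herm.eigenvalues i = 1/2 := by
    intro i
    have h0 : (((1/2 : ℝ) : ℂ) • (1 : Matrix (Fin 2) (Fin 2) ℂ) - ((1/2 : ℝ) : ℂ) • 1)
        * (((1/2 : ℝ) : ℂ) • (1 : Matrix (Fin 2) (Fin 2) ℂ) - ((1/2 : ℝ) : ℂ) • 1) = 0 := by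
      simp
    rcases eig_quad half_one_herm (1/2) (1/2) h0 i with h | h <;> exact h
  simp only [heig]
  rw [Fin.sum_univ_two]
  rw [show Real.log (1/2) = -Real.log 2 by rw [one_div, Real.log_inv]]
  ring

lemma rho_herm : (rhoLam (4/5)).IsHermitian := rho_psd.1

lemma vNE_rho : vNE (rhoLam (4/5))
    = -((17/20) * Real.log (17/20) + 3 * ((1/20) * Real.log (1/20))) := by
  rw [vNE, dif_pos rho_herm]
  set e : Fin 2 × Fin 2 → ℝ := rho_herm.eigenvalues with he
  have hmem : ∀ i, e i = 17/20 ∨ e i = 1/20 := fun i => eig_quad rho_herm _ _ rho_quad i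
  have hsum : ∑ i, e i = 1 := by
    have := trace_eq_sum_eig rho_herm
    rw [rho_trace] at this
    have : ((∑ i, e i : ℝ) : ℂ) = ((1 : ℝ) : ℂ) := by push_cast; rw [← this]
    exact_mod_cast this
  set A : ℝ := (17/20) * Real.log (17/20) with hA
  set B : ℝ := (1/20) * Real.log (1/20) with hB
  set β : ℝ := (5/4) * (A - B) with hβ
  set α : ℝ := B - β/20 with hα
  have haff : ∀ i, e i * Real.log (e i) = α + β * e i := by
    intro i
    rcases hmem i with h | h <;> rw [h] <;> rw [hα, hβ, hA, hB] <;> ring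
  calc -∑ i, e i * Real.log (e i) = -∑ i, (α + β * e i) := by
        congr 1; exact Finset.sum_congr rfl fun i _ => haff i
    _ = -(4 * α + β * ∑ i, e i) := by
        rw [Finset.sum_add_distrib, Finset.sum_const, ← Finset.mul_sum]
        norm_num [Fintype.card_prod]
    _ = -(A + 3 * B) := by rw [hsum, hα, hβ]; ring



lemma key_numerics :
    -(1/2 : ℝ) ≤ -((17/20) * Real.log (17/20) + 3 * ((1/20) * Real.log (1/20))) - Real.log 2
    ∧ -((17/20) * Real.log (17/20) + 3 * ((1/20) * Real.log (1/20))) - Real.log 2 < 0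
    ∧ 0 ≤ Real.log 2
        + (-((17/20) * Real.log (17/20) + 3 * ((1/20) * Real.log (1/20))) - Real.log 2)
        + (-((17/20) * Real.log (17/20) + 3 * ((1/20) * Real.log (1/20))) - Real.log 2) := by
  have h1 : Real.log (17/20) ≤ -(3/20 : ℝ) := by
    have := Real.log_le_sub_one_of_pos (x := (17/20 : ℝ)) (by norm_num)
    linarith
  have h2 : -(3/17 : ℝ) ≤ Real.log (17/20) := by
    have := Real.log_le_sub_one_of_pos (x := ((17/20 : ℝ))⁻¹) (by norm_num)
    rw [Real.log_inv] at this
    have h' : ((17/20 : ℝ))⁻¹ = 20/17 := by norm_num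
    rw [h'] at this
    linarith
  have hl20 : Real.log (1/20 : ℝ) = -(4 * Real.log 2 + Real.log (5/4)) := by
    rw [show (1/20 : ℝ) = ((2:ℝ)^4 * (5/4))⁻¹ by norm_num, Real.log_inv,
      Real.log_mul (by norm_num) (by norm_num), Real.log_pow]
    norm_num
  have h3 : Real.log (5/4 : ℝ) ≤ 1/4 := by
    have := Real.log_le_sub_one_of_pos (x := (5/4 : ℝ)) (by norm_num)
    linarith
  have h4 : (1/5 : ℝ) ≤ Real.log (5/4) := by
    have := Real.log_le_sub_one_of_pos (x := ((5/4 : ℝ))⁻¹) (by norm_num)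
    rw [Real.log_inv] at this
    have h' : ((5/4 : ℝ))⁻¹ = 4/5 := by norm_num
    rw [h'] at this
    linarith
  have h5 := Real.log_two_gt_d9
  have h6 := Real.log_two_lt_d9
  rw [hl20]
  norm_num at h5 h6 ⊢
  refine ⟨by linarith, by linarith, by linarith⟩

/-- **MED does not imply weak monotonicity**: there is `λ ∈ (0,1)` with
`-1/2 ≤ S(2|1)_{ρ_λ} < 0` for `ρ_λ = λ|ψ⁻⟩⟨ψ⁻| + (1-λ)𝟙/4`; assigning `ρ_λ` to every pair of
three sites gives a locally consistent family of density operators (`ρ_λ` is swap symmetric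
with both one-body marginals equal) that violates every weak monotonicity inequality
`S(i|j) + S(i|k) ≥ 0` while satisfying all 2-body MED inequalities
`S(i) + S(j|i) + S(k|j) ≥ 0` and `S(i) + S(j|i) + S(k|i) ≥ 0`. -/
theorem MED_does_not_imply_weak_monotonicity :
    ∃ lam : ℝ, 0 < lam ∧ lam < 1 ∧
      (-(1 / 2) ≤ vNE (rhoLam lam) - vNE (ptraceR (rhoLam lam))
        ∧ vNE (rhoLam lam) - vNE (ptraceR (rhoLam lam)) < 0) ∧
      IsDensityOp (rhoLam lam) ∧
      (Matrix.of fun p q => rhoLam lam p.swap q.swap) = rhoLam lam ∧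
      ptraceL (rhoLam lam) = ptraceR (rhoLam lam) ∧
      ((vNE (rhoLam lam) - vNE (ptraceL (rhoLam lam)))
          + (vNE (rhoLam lam) - vNE (ptraceL (rhoLam lam))) < 0) ∧
      (0 ≤ vNE (ptraceR (rhoLam lam)) + (vNE (rhoLam lam) - vNE (ptraceR (rhoLam lam)))
          + (vNE (rhoLam lam) - vNE (ptraceR (rhoLam lam)))) := by
  refine ⟨4/5, by norm_num, by norm_num, ?_, ⟨rho_psd, rho_trace⟩, ?_, ptL.trans ptR.symm, ?_, ?_⟩
  · rw [ptR, vNE_half_one, vNE_rho]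
    exact ⟨key_numerics.1, key_numerics.2.1⟩
  · ext ⟨i, j⟩ ⟨k, l⟩
    fin_cases i <;> fin_cases j <;> fin_cases k <;> fin_cases l <;>
      simp [rhoLam, singletProj, psiMinus, Prod.ext_iff, Matrix.one_apply, Prod.swap]
  · rw [ptL, vNE_half_one, vNE_rho]
    linarith [key_numerics.2.1]
  · rw [ptR, vNE_half_one, vNE_rho]
    exact key_numerics.2.2


end
end

section
/- On three sites, the 2-body weak monotonicity constraints imply all 2-body MED constraints: let ρ_{12}, ρ_{13}, ρ_{23} be density operators on ℂ^d⊗ℂ^d that are pairwise locally consistent (the one-body marginal at each site is the same across all pairs containing it). If S(i|j) + S(i|k) ≥ 0 for all distinct i,j,k ∈ {1,2,3}, then S(i) + S(j|i) + S(k|j) ≥ 0 and S(i) + S(j|i) + S(k|i) ≥ 0 for all distinct i,j,k ∈ {1,2,3}. -/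
open scoped Matrix Kronecker ComplexOrder

noncomputable section

open Finset Polynomial Matrix

section Aux


/-- `log x ≥ 1 - 1/x` for `x > 0`. -/
lemma log_ge_one_sub_inv {x : ℝ} (hx : 0 < x) : 1 - x⁻¹ ≤ Real.log x := by
  have h := Real.log_le_sub_one_of_pos (inv_pos.mpr hx)
  rw [Real.log_inv] at h
  linarith

lemma scalar_subadd {I A B : Type*} [Fintype I] [Fintype A] [Fintype B]
    (p : I → ℝ) (c : I → A × B → ℝ) (α : A → ℝ) (β : B → ℝ)
    (hp : ∀ i, 0 ≤ p i) (hpsum : ∑ i, p i = 1)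
    (hc : ∀ i j, 0 ≤ c i j) (hcrow : ∀ i, ∑ j, c i j = 1) (hccol : ∀ j, ∑ i, c i j = 1)
    (hα : ∀ x, ∑ y, (∑ i, p i * c i (x, y)) = α x)
    (hβ : ∀ y, ∑ x, (∑ i, p i * c i (x, y)) = β y) :
    -∑ i, p i * Real.log (p i) ≤
      (-∑ x, α x * Real.log (α x)) + (-∑ y, β y * Real.log (β y)) := by
  set r : A × B → ℝ := fun j => ∑ i, p i * c i j with hr
  have hr0 : ∀ j, 0 ≤ r j := fun j => Finset.sum_nonneg fun i _ => mul_nonneg (hp i) (hc i j)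
  have hrα : ∀ x, ∑ y, r (x, y) = α x := hα
  have hrβ : ∀ y, ∑ x, r (x, y) = β y := hβ
  have hα0 : ∀ x, 0 ≤ α x := fun x => (hrα x) ▸ Finset.sum_nonneg fun y _ => hr0 _
  have hβ0 : ∀ y, 0 ≤ β y := fun y => (hrβ y) ▸ Finset.sum_nonneg fun x _ => hr0 _
  have hrleα : ∀ j : A × B, r j ≤ α j.1 := by
    intro j
    rw [← hrα j.1]
    exact Finset.single_le_sum (f := fun y => r (j.1, y)) (fun y _ => hr0 _) (mem_univ j.2)
  have hrleβ : ∀ j : A × B, r j ≤ β j.2 := by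
    intro j
    rw [← hrβ j.2]
    exact Finset.single_le_sum (f := fun x => r (x, j.2)) (fun x _ => hr0 _) (mem_univ j.1)
  set q : A × B → ℝ := fun j => α j.1 * β j.2 with hq
  -- if q j = 0 then r j = 0
  have hqr : ∀ j, q j = 0 → r j = 0 := by
    intro j hj
    rcases mul_eq_zero.mp hj with h | h
    · exact le_antisymm (h ▸ hrleα j) (hr0 j)
    · exact le_antisymm (h ▸ hrleβ j) (hr0 j)
  -- sum of q is 1
  have hαsum : ∑ x, α x = 1 := by
    have : ∑ x, ∑ y, r (x, y) = ∑ x, α x := Finset.sum_congr rfl fun x _ => hrα x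
    rw [← this]
    rw [← Fintype.sum_prod_type]
    have : ∑ j : A × B, r j = ∑ i, p i * (∑ j, c i j) := by
      rw [Finset.sum_comm]
      exact Finset.sum_congr rfl fun i _ => by rw [Finset.mul_sum]
    rw [this]
    simp only [hcrow, mul_one, hpsum]
  have hβsum : ∑ y, β y = 1 := by
    have : ∑ y, ∑ x, r (x, y) = ∑ y, β y := Finset.sum_congr rfl fun y _ => hrβ y
    rw [← this]
    rw [← Fintype.sum_prod_type_right]
    have : ∑ j : A × B, r j = ∑ i, p i * (∑ j, c i j) := by
      rw [Finset.sum_comm]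
      exact Finset.sum_congr rfl fun i _ => by rw [Finset.mul_sum]
    rw [this]
    simp only [hcrow, mul_one, hpsum]
  have hqsum : ∑ j : A × B, q j = 1 := by
    rw [Fintype.sum_prod_type]
    simp only [hq]
    rw [show ∑ x, ∑ y, α x * β y = (∑ x, α x) * (∑ y, β y) by
      rw [Finset.sum_mul]; exact Finset.sum_congr rfl fun x _ => (Finset.mul_sum _ _ _).symm]
    rw [hαsum, hβsum, one_mul]
  -- key inequality: ∑_j r j * log (q j) ≤ ∑_i p i * log (p i)
  have key : ∑ j, r j * Real.log (q j) ≤ ∑ i, p i * Real.log (p i) := by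
    have main : ∀ i j, c i j * (p i - q j) ≤ p i * c i j * (Real.log (p i) - Real.log (q j)) := by
      intro i j
      rcases eq_or_lt_of_le (hc i j) with hc0 | hcpos
      · simp [← hc0]
      rcases eq_or_lt_of_le (hp i) with hp0 | hppos
      · rw [← hp0]
        simp only [zero_mul, zero_sub, mul_zero]
        have : 0 ≤ q j := mul_nonneg (hα0 _) (hβ0 _)
        nlinarith
      have hqpos : 0 < q j := by
        rcases eq_or_lt_of_le (mul_nonneg (hα0 j.1) (hβ0 j.2)) with h | h
        · exfalso
          have hr0j : r j = 0 := hqr j h.symm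
          have : ∀ i' ∈ univ, (0:ℝ) ≤ p i' * c i' j := fun i' _ => mul_nonneg (hp i') (hc i' j)
          have := (Finset.sum_eq_zero_iff_of_nonneg this).mp hr0j i (mem_univ i)
          nlinarith
        · exact h
      have hlog : Real.log (p i) - Real.log (q j) = Real.log (p i / q j) := by
        rw [Real.log_div (ne_of_gt hppos) (ne_of_gt hqpos)]
      have hge : 1 - (p i / q j)⁻¹ ≤ Real.log (p i / q j) :=
        log_ge_one_sub_inv (div_pos hppos hqpos)
      rw [hlog]
      have hinv : (p i / q j)⁻¹ = q j / p i := by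
        field_simp
      rw [hinv] at hge
      have h1 : p i * (1 - q j / p i) = p i - q j := by
        field_simp
      nlinarith [mul_le_mul_of_nonneg_left hge (le_of_lt hppos)]
    have hsum : ∑ i, ∑ j, c i j * (p i - q j) ≤ ∑ i, ∑ j, p i * c i j * (Real.log (p i) - Real.log (q j)) :=
      Finset.sum_le_sum fun i _ => Finset.sum_le_sum fun j _ => main i j
    have hL : ∑ i, ∑ j, c i j * (p i - q j) = 0 := by
      have h1 : ∑ i, ∑ j, c i j * p i = 1 := by
        have : ∀ i, ∑ j, c i j * p i = p i := by
          intro i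
          rw [← Finset.sum_mul, hcrow, one_mul]
        simp only [this, hpsum]
      have h2 : ∑ i, ∑ j, c i j * q j = 1 := by
        rw [Finset.sum_comm]
        have : ∀ j, ∑ i, c i j * q j = q j := by
          intro j
          rw [← Finset.sum_mul, hccol, one_mul]
        simp only [this, hqsum]
      calc ∑ i, ∑ j, c i j * (p i - q j)
          = ∑ i, ∑ j, (c i j * p i - c i j * q j) := by
            exact Finset.sum_congr rfl fun i _ => Finset.sum_congr rfl fun j _ => by ring
        _ = (∑ i, ∑ j, c i j * p i) - ∑ i, ∑ j, c i j * q j := by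
            rw [← Finset.sum_sub_distrib]
            exact Finset.sum_congr rfl fun i _ => Finset.sum_sub_distrib _ _
        _ = 0 := by rw [h1, h2]; ring
    have hR : ∑ i, ∑ j, p i * c i j * (Real.log (p i) - Real.log (q j))
        = ∑ i, p i * Real.log (p i) - ∑ j, r j * Real.log (q j) := by
      have e1 : ∑ i, ∑ j, p i * c i j * Real.log (p i) = ∑ i, p i * Real.log (p i) := by
        refine Finset.sum_congr rfl fun i _ => ?_
        have : ∑ j, p i * c i j * Real.log (p i) = (∑ j, c i j) * (p i * Real.log (p i)) := by
          rw [Finset.sum_mul]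
          exact Finset.sum_congr rfl fun j _ => by ring
        rw [this, hcrow, one_mul]
      have e2 : ∑ i, ∑ j, p i * c i j * Real.log (q j) = ∑ j, r j * Real.log (q j) := by
        rw [Finset.sum_comm]
        refine Finset.sum_congr rfl fun j _ => ?_
        rw [hr, Finset.sum_mul]
      calc ∑ i, ∑ j, p i * c i j * (Real.log (p i) - Real.log (q j))
          = ∑ i, ∑ j, (p i * c i j * Real.log (p i) - p i * c i j * Real.log (q j)) := by
            exact Finset.sum_congr rfl fun i _ => Finset.sum_congr rfl fun j _ => by ring
        _ = (∑ i, ∑ j, p i * c i j * Real.log (p i)) - ∑ i, ∑ j, p i * c i j * Real.log (q j) := by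
            rw [← Finset.sum_sub_distrib]
            exact Finset.sum_congr rfl fun i _ => Finset.sum_sub_distrib _ _
        _ = ∑ i, p i * Real.log (p i) - ∑ j, r j * Real.log (q j) := by rw [e1, e2]
    linarith [hsum, hL, hR]
  have final : ∑ j, r j * Real.log (q j)
      = ∑ x, α x * Real.log (α x) + ∑ y, β y * Real.log (β y) := by
    have hterm : ∀ j, r j * Real.log (q j)
        = r j * Real.log (α j.1) + r j * Real.log (β j.2) := by
      intro j
      rcases eq_or_lt_of_le (hr0 j) with h0 | hpos
      · rw [← h0]; ring
      · have hαpos : 0 < α j.1 := lt_of_lt_of_le hpos (hrleα j)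
        have hβpos : 0 < β j.2 := lt_of_lt_of_le hpos (hrleβ j)
        rw [hq]
        rw [Real.log_mul (ne_of_gt hαpos) (ne_of_gt hβpos)]
        ring
    rw [Finset.sum_congr rfl fun j _ => hterm j, Finset.sum_add_distrib]
    congr 1
    · rw [Fintype.sum_prod_type]
      refine Finset.sum_congr rfl fun x _ => ?_
      rw [show ∑ y, r (x, y) * Real.log (α x) = (∑ y, r (x, y)) * Real.log (α x) from
        (Finset.sum_mul _ _ _).symm, hrα]
    · rw [Fintype.sum_prod_type_right]
      refine Finset.sum_congr rfl fun y _ => ?_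
      rw [show ∑ x, r (x, y) * Real.log (β y) = (∑ x, r (x, y)) * Real.log (β y) from
        (Finset.sum_mul _ _ _).symm, hrβ]
  rw [final] at key
  linarith


variable {n m : Type*} [Fintype n] [DecidableEq n] [Fintype m] [DecidableEq m]

lemma charpoly_diagonal' (v : n → ℂ) :
    (Matrix.diagonal v).charpoly = ∏ i, (X - C (v i)) := by
  have h : charmatrix (Matrix.diagonal v) = Matrix.diagonal fun i => (X : ℂ[X]) - C (v i) := by
    ext i j
    by_cases hij : i = j
    · subst hij
      simp [charmatrix_apply_eq]
    · rw [charmatrix_apply_ne _ _ _ hij, Matrix.diagonal_apply_ne _ hij,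
        Matrix.diagonal_apply_ne _ hij]
      simp
  rw [Matrix.charpoly, h, Matrix.det_diagonal]

lemma charpoly_hermitian {A : Matrix n n ℂ} (hA : A.IsHermitian) :
    A.charpoly = ∏ i, (X - C ((hA.eigenvalues i : ℂ))) := by
  set U : Matrix n n ℂ := (hA.eigenvectorUnitary : Matrix n n ℂ) with hU
  have h1 : star U * U = 1 := Unitary.coe_star_mul_self hA.eigenvectorUnitary
  have h2 : U * star U = 1 := Unitary.coe_mul_star_self hA.eigenvectorUnitary
  set D : Matrix n n ℂ := Matrix.diagonal (RCLike.ofReal ∘ hA.eigenvalues) with hD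
  have hspec : A = U * D * star U := hA.spectral_theorem
  have hcm : charmatrix A = (C.mapMatrix U) * charmatrix D * (C.mapMatrix (star U)) := by
    rw [charmatrix, charmatrix, hspec, _root_.map_mul, _root_.map_mul]
    rw [Matrix.mul_sub, Matrix.sub_mul]
    congr 1
    · have hcomm : Commute ((scalar n) (X : ℂ[X])) (C.mapMatrix U) :=
        scalar_commute _ (fun r' => Commute.all _ _) _
      rw [← hcomm.eq, Matrix.mul_assoc, ← _root_.map_mul, h2, _root_.map_one, Matrix.mul_one]
  have hdet : A.charpoly = D.charpoly := by
    rw [Matrix.charpoly, Matrix.charpoly, hcm, Matrix.det_mul, Matrix.det_mul]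
    have h3 : (C.mapMatrix (star U)).det * (C.mapMatrix U).det = 1 := by
      rw [← Matrix.det_mul, ← _root_.map_mul, h1, _root_.map_one, Matrix.det_one]
    rw [show (C.mapMatrix U).det * (charmatrix D).det * (C.mapMatrix (star U)).det
        = (charmatrix D).det * ((C.mapMatrix (star U)).det * (C.mapMatrix U).det) from by ring,
      h3, mul_one]
  rw [hdet, hD, charpoly_diagonal']
  rfl

/-- sums of a function of eigenvalues agree for Hermitian matrices with equal charpoly -/
lemma sum_eigenvalues_congr {A : Matrix n n ℂ} {B : Matrix m m ℂ}
    (hA : A.IsHermitian) (hB : B.IsHermitian) (h : A.charpoly.roots = B.charpoly.roots)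
    (f : ℝ → ℝ) :
    ∑ i, f (hA.eigenvalues i) = ∑ i, f (hB.eigenvalues i) := by
  have hrootsA : A.charpoly.roots = (Finset.univ.val.map hA.eigenvalues).map
      (fun x : ℝ => (x : ℂ)) := by
    rw [charpoly_hermitian hA]
    rw [show ∏ i, ((X : ℂ[X]) - C ((hA.eigenvalues i : ℂ)))
        = ((Finset.univ.val.map hA.eigenvalues).map (fun x : ℝ => (x:ℂ))
            |>.map (fun a : ℂ => (X : ℂ[X]) - C a)).prod from ?_]
    · exact Polynomial.roots_multiset_prod_X_sub_C _
    · rw [Multiset.map_map, Multiset.map_map]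
      rfl
  have hrootsB : B.charpoly.roots = (Finset.univ.val.map hB.eigenvalues).map
      (fun x : ℝ => (x : ℂ)) := by
    rw [charpoly_hermitian hB]
    rw [show ∏ i, ((X : ℂ[X]) - C ((hB.eigenvalues i : ℂ)))
        = ((Finset.univ.val.map hB.eigenvalues).map (fun x : ℝ => (x:ℂ))
            |>.map (fun a : ℂ => (X : ℂ[X]) - C a)).prod from ?_]
    · exact Polynomial.roots_multiset_prod_X_sub_C _
    · rw [Multiset.map_map, Multiset.map_map]
      rfl
  have hmult : Finset.univ.val.map hA.eigenvalues = Finset.univ.val.map hB.eigenvalues := by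
    have := hrootsA ▸ hrootsB ▸ h
    exact Multiset.map_injective (fun x y => by exact_mod_cast fun h => h) this
  calc ∑ i, f (hA.eigenvalues i) = ((Finset.univ.val.map hA.eigenvalues).map f).sum := by
        rw [Multiset.map_map]; rfl
    _ = ((Finset.univ.val.map hB.eigenvalues).map f).sum := by rw [hmult]
    _ = ∑ i, f (hB.eigenvalues i) := by rw [Multiset.map_map]; rfl



lemma vNE_submatrix (A : Matrix n n ℂ) (e : m ≃ n) : vNE (A.submatrix e e) = vNE A := by
  by_cases hA : A.IsHermitian
  · have hsub : (A.submatrix ⇑e ⇑e).IsHermitian := hA.submatrix e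
    have hchar : (A.submatrix ⇑e ⇑e).charpoly = A.charpoly := by
      have : A.submatrix ⇑e ⇑e = (Matrix.reindex e.symm e.symm) A := by
        simp [Matrix.reindex_apply]
      rw [this, Matrix.charpoly_reindex]
    rw [vNE, vNE, dif_pos hA, dif_pos hsub, neg_inj]
    exact sum_eigenvalues_congr hsub hA (by rw [hchar]) (fun x => x * Real.log x)
  · have hsub : ¬(A.submatrix ⇑e ⇑e).IsHermitian := by
      rw [Matrix.isHermitian_submatrix_equiv]
      exact hA
    rw [vNE, vNE, dif_neg hA, dif_neg hsub]

variable {a b : Type*} [Fintype a] [Fintype b] [DecidableEq a] [DecidableEq b]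

lemma kronecker_conjTranspose' (U : Matrix a a ℂ) (V : Matrix b b ℂ) :
    (U ⊗ₖ V)ᴴ = Uᴴ ⊗ₖ Vᴴ := by
  ext ⟨i, j⟩ ⟨k, l⟩
  simp [Matrix.conjTranspose_apply, Matrix.kroneckerMap_apply, mul_comm]

lemma ptraceR_conj (ρ : Matrix (a × b) (a × b) ℂ) (U : Matrix a a ℂ) (V : Matrix b b ℂ)
    (hV : V * Vᴴ = 1) :
    ptraceR ((U ⊗ₖ V)ᴴ * ρ * (U ⊗ₖ V)) = Uᴴ * ptraceR ρ * U := by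
  ext x x'
  have hVd : ∀ t t' : b, ∑ y, star (V t y) * V t' y = if t' = t then 1 else 0 := by
    intro t t'
    have h : (V * Vᴴ) t' t = (1 : Matrix b b ℂ) t' t := by rw [hV]
    simpa [Matrix.mul_apply, Matrix.conjTranspose_apply, Matrix.one_apply, mul_comm]
      using h
  calc (ptraceR ((U ⊗ₖ V)ᴴ * ρ * (U ⊗ₖ V))) x x'
      = ∑ y, ∑ p : a × b, ∑ q : a × b,
          star ((U ⊗ₖ V) p (x, y)) * ρ p q * ((U ⊗ₖ V) q (x', y)) := by
        simp only [ptraceR, Matrix.of_apply, Matrix.mul_apply, Matrix.conjTranspose_apply,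
          Finset.sum_mul, Finset.mul_sum]
        refine Finset.sum_congr rfl fun y _ => ?_
        rw [Finset.sum_comm]
    _ = ∑ p : a × b, ∑ q : a × b, ∑ y,
          star ((U ⊗ₖ V) p (x, y)) * ρ p q * ((U ⊗ₖ V) q (x', y)) := by
        rw [Finset.sum_comm]
        refine Finset.sum_congr rfl fun p _ => Finset.sum_comm
    _ = ∑ s, ∑ t, ∑ s', ∑ t',
          (star (U s x) * ρ (s, t) (s', t') * U s' x')
            * ∑ y, star (V t y) * V t' y := by
        rw [Fintype.sum_prod_type]
        refine Finset.sum_congr rfl fun s _ => Finset.sum_congr rfl fun t _ => ?_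
        rw [Fintype.sum_prod_type]
        refine Finset.sum_congr rfl fun s' _ => Finset.sum_congr rfl fun t' _ => ?_
        rw [Finset.mul_sum]
        refine Finset.sum_congr rfl fun y _ => ?_
        simp only [Matrix.kroneckerMap_apply, star_mul']
        ring
    _ = ∑ s, ∑ t, ∑ s', star (U s x) * ρ (s, t) (s', t) * U s' x' := by
        refine Finset.sum_congr rfl fun s _ => Finset.sum_congr rfl fun t _ => ?_
        refine Finset.sum_congr rfl fun s' _ => ?_
        rw [Finset.sum_congr rfl fun t' _ => by rw [hVd t t']]
        simp
    _ = ∑ s', ∑ s, ∑ t, star (U s x) * ρ (s, t) (s', t) * U s' x' := by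
        rw [show (∑ s, ∑ t, ∑ s', star (U s x) * ρ (s, t) (s', t) * U s' x')
            = ∑ s, ∑ s', ∑ t, star (U s x) * ρ (s, t) (s', t) * U s' x' from
          Finset.sum_congr rfl fun s _ => Finset.sum_comm]
        exact Finset.sum_comm
    _ = (Uᴴ * ptraceR ρ * U) x x' := by
        simp only [Matrix.mul_apply, Matrix.conjTranspose_apply, ptraceR, Matrix.of_apply,
          Finset.sum_mul, Finset.mul_sum]

lemma ptraceL_conj (ρ : Matrix (a × b) (a × b) ℂ) (U : Matrix a a ℂ) (V : Matrix b b ℂ)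
    (hU : U * Uᴴ = 1) :
    ptraceL ((U ⊗ₖ V)ᴴ * ρ * (U ⊗ₖ V)) = Vᴴ * ptraceL ρ * V := by
  ext y y'
  have hUd : ∀ s s' : a, ∑ x, star (U s x) * U s' x = if s' = s then 1 else 0 := by
    intro s s'
    have h : (U * Uᴴ) s' s = (1 : Matrix a a ℂ) s' s := by rw [hU]
    simpa [Matrix.mul_apply, Matrix.conjTranspose_apply, Matrix.one_apply, mul_comm]
      using h
  calc (ptraceL ((U ⊗ₖ V)ᴴ * ρ * (U ⊗ₖ V))) y y'
      = ∑ x, ∑ p : a × b, ∑ q : a × b,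
          star ((U ⊗ₖ V) p (x, y)) * ρ p q * ((U ⊗ₖ V) q (x, y')) := by
        simp only [ptraceL, Matrix.of_apply, Matrix.mul_apply, Matrix.conjTranspose_apply,
          Finset.sum_mul, Finset.mul_sum]
        refine Finset.sum_congr rfl fun x _ => ?_
        rw [Finset.sum_comm]
    _ = ∑ p : a × b, ∑ q : a × b, ∑ x,
          star ((U ⊗ₖ V) p (x, y)) * ρ p q * ((U ⊗ₖ V) q (x, y')) := by
        rw [Finset.sum_comm]
        refine Finset.sum_congr rfl fun p _ => Finset.sum_comm
    _ = ∑ s, ∑ t, ∑ t', ∑ s',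
          (star (V t y) * ρ (s, t) (s', t') * V t' y')
            * ∑ x, star (U s x) * U s' x := by
        rw [Fintype.sum_prod_type]
        refine Finset.sum_congr rfl fun s _ => Finset.sum_congr rfl fun t _ => ?_
        rw [Fintype.sum_prod_type]
        rw [Finset.sum_comm]
        refine Finset.sum_congr rfl fun t' _ => Finset.sum_congr rfl fun s' _ => ?_
        rw [Finset.mul_sum]
        refine Finset.sum_congr rfl fun x _ => ?_
        simp only [Matrix.kroneckerMap_apply, star_mul']
        ring
    _ = ∑ s, ∑ t, ∑ t', star (V t y) * ρ (s, t) (s, t') * V t' y' := by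
        refine Finset.sum_congr rfl fun s _ => Finset.sum_congr rfl fun t _ =>
          Finset.sum_congr rfl fun t' _ => ?_
        rw [Finset.sum_congr rfl fun s' _ => by rw [hUd s s']]
        simp
    _ = ∑ t', ∑ t, ∑ s, star (V t y) * ρ (s, t) (s, t') * V t' y' := by
        rw [show (∑ s, ∑ t, ∑ t', star (V t y) * ρ (s, t) (s, t') * V t' y')
            = ∑ t, ∑ s, ∑ t', star (V t y) * ρ (s, t) (s, t') * V t' y' from Finset.sum_comm]
        rw [show (∑ t, ∑ s, ∑ t', star (V t y) * ρ (s, t) (s, t') * V t' y')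
            = ∑ t, ∑ t', ∑ s, star (V t y) * ρ (s, t) (s, t') * V t' y' from
          Finset.sum_congr rfl fun t _ => Finset.sum_comm]
        exact Finset.sum_comm
    _ = (Vᴴ * ptraceL ρ * V) y y' := by
        simp only [Matrix.mul_apply, Matrix.conjTranspose_apply, ptraceL, Matrix.of_apply,
          Finset.sum_mul, Finset.mul_sum]

lemma ptraceR_isHermitian {ρ : Matrix (a × b) (a × b) ℂ} (h : ρ.IsHermitian) :
    (ptraceR ρ).IsHermitian := by
  ext i j
  simp only [Matrix.conjTranspose_apply, ptraceR, Matrix.of_apply, star_sum]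
  exact Finset.sum_congr rfl fun k _ => h.apply _ _

lemma ptraceL_isHermitian {ρ : Matrix (a × b) (a × b) ℂ} (h : ρ.IsHermitian) :
    (ptraceL ρ).IsHermitian := by
  ext i j
  simp only [Matrix.conjTranspose_apply, ptraceL, Matrix.of_apply, star_sum]
  exact Finset.sum_congr rfl fun k _ => h.apply _ _

theorem vNE_subadd (ρ : Matrix (a × b) (a × b) ℂ) (hρ : ρ.PosSemidef) (htr : ρ.trace = 1) :
    vNE ρ ≤ vNE (ptraceR ρ) + vNE (ptraceL ρ) := by
  have hH : ρ.IsHermitian := hρ.1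
  have hAH : (ptraceR ρ).IsHermitian := ptraceR_isHermitian hH
  have hBH : (ptraceL ρ).IsHermitian := ptraceL_isHermitian hH
  set p : (a × b) → ℝ := hH.eigenvalues with hp_def
  set α : a → ℝ := hAH.eigenvalues with hα_def
  set β : b → ℝ := hBH.eigenvalues with hβ_def
  set P : Matrix (a × b) (a × b) ℂ := (hH.eigenvectorUnitary : Matrix (a × b) (a × b) ℂ)
  set U : Matrix a a ℂ := (hAH.eigenvectorUnitary : Matrix a a ℂ)
  set V : Matrix b b ℂ := (hBH.eigenvectorUnitary : Matrix b b ℂ)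
  have hPst : Pᴴ * P = 1 := by
    simpa [Matrix.star_eq_conjTranspose] using Unitary.coe_star_mul_self hH.eigenvectorUnitary
  have hPts : P * Pᴴ = 1 := by
    simpa [Matrix.star_eq_conjTranspose] using Unitary.coe_mul_star_self hH.eigenvectorUnitary
  have hUst : Uᴴ * U = 1 := by
    simpa [Matrix.star_eq_conjTranspose] using Unitary.coe_star_mul_self hAH.eigenvectorUnitary
  have hUts : U * Uᴴ = 1 := by
    simpa [Matrix.star_eq_conjTranspose] using Unitary.coe_mul_star_self hAH.eigenvectorUnitary
  have hVst : Vᴴ * V = 1 := by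
    simpa [Matrix.star_eq_conjTranspose] using Unitary.coe_star_mul_self hBH.eigenvectorUnitary
  have hVts : V * Vᴴ = 1 := by
    simpa [Matrix.star_eq_conjTranspose] using Unitary.coe_mul_star_self hBH.eigenvectorUnitary
  set K : Matrix (a × b) (a × b) ℂ := U ⊗ₖ V with hK_def
  have hKst : Kᴴ * K = 1 := by
    rw [hK_def, kronecker_conjTranspose', ← Matrix.mul_kronecker_mul, hUst, hVst,
      Matrix.one_kronecker_one]
  have hKts : K * Kᴴ = 1 := by
    rw [hK_def, kronecker_conjTranspose', ← Matrix.mul_kronecker_mul, hUts, hVts,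
      Matrix.one_kronecker_one]
  set W : Matrix (a × b) (a × b) ℂ := Pᴴ * K with hW_def
  have hW1 : Wᴴ * W = 1 := by
    rw [hW_def, Matrix.conjTranspose_mul, Matrix.conjTranspose_conjTranspose, Matrix.mul_assoc,
      ← Matrix.mul_assoc P, hPts, Matrix.one_mul, hKst]
  have hW2 : W * Wᴴ = 1 := by
    rw [hW_def, Matrix.conjTranspose_mul, Matrix.conjTranspose_conjTranspose, Matrix.mul_assoc,
      ← Matrix.mul_assoc K, hKts, Matrix.one_mul, hPst]
  set c : (a × b) → (a × b) → ℝ := fun i j => Complex.normSq (W i j) with hc_def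
  have hcrow : ∀ i, ∑ j, c i j = 1 := by
    intro i
    have h := Matrix.ext_iff.mpr hW2 i i
    rw [Matrix.mul_apply, Matrix.one_apply_eq] at h
    have h2 : ∑ j, ((c i j : ℂ)) = 1 := by
      rw [← h]
      refine Finset.sum_congr rfl fun j _ => ?_
      rw [Matrix.conjTranspose_apply, hc_def]
      rw [Complex.normSq_eq_conj_mul_self, starRingEnd_apply]
      ring
    exact_mod_cast h2
  have hccol : ∀ j, ∑ i, c i j = 1 := by
    intro j
    have h := Matrix.ext_iff.mpr hW1 j j
    rw [Matrix.mul_apply, Matrix.one_apply_eq] at h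
    have h2 : ∑ i, ((c i j : ℂ)) = 1 := by
      rw [← h]
      refine Finset.sum_congr rfl fun i _ => ?_
      rw [Matrix.conjTranspose_apply, hc_def]
      rw [Complex.normSq_eq_conj_mul_self, starRingEnd_apply]
    exact_mod_cast h2
  set M : Matrix (a × b) (a × b) ℂ := Kᴴ * ρ * K with hM_def
  have hM : M = Wᴴ * Matrix.diagonal (RCLike.ofReal ∘ p) * W := by
    rw [hM_def, hW_def, Matrix.conjTranspose_mul, Matrix.conjTranspose_conjTranspose]
    conv_lhs => rw [hH.spectral_theorem]
    rw [Unitary.conjStarAlgAut_apply, Matrix.star_eq_conjTranspose]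
    noncomm_ring
  have hMdiag : ∀ j, M j j = ((∑ i, p i * c i j : ℝ) : ℂ) := by
    intro j
    rw [hM, Matrix.mul_assoc, Matrix.mul_apply]
    push_cast
    refine Finset.sum_congr rfl fun i _ => ?_
    rw [Matrix.conjTranspose_apply, Matrix.diagonal_mul]
    rw [hc_def, Complex.normSq_eq_conj_mul_self, starRingEnd_apply]
    simp only [Function.comp_apply]
    norm_cast
    ring_nf
    exact mul_right_comm _ _ _
  have hAd : ptraceR M = Matrix.diagonal (RCLike.ofReal ∘ α) := by
    rw [hM_def, hK_def, ptraceR_conj ρ U V hVts]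
    have h := hAH.conjStarAlgAut_star_eigenvectorUnitary
    rw [Unitary.conjStarAlgAut_apply, Unitary.coe_star, star_star, Matrix.star_eq_conjTranspose] at h
    exact h
  have hBd : ptraceL M = Matrix.diagonal (RCLike.ofReal ∘ β) := by
    rw [hM_def, hK_def, ptraceL_conj ρ U V hUts]
    have h := hBH.conjStarAlgAut_star_eigenvectorUnitary
    rw [Unitary.conjStarAlgAut_apply, Unitary.coe_star, star_star, Matrix.star_eq_conjTranspose] at h
    exact h
  have hα : ∀ x, ∑ y, (∑ i, p i * c i (x, y)) = α x := by
    intro x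
    have h : ∑ y, M (x, y) (x, y) = ((α x : ℝ) : ℂ) := by
      have h0 : (ptraceR M) x x = ((α x : ℝ) : ℂ) := by
        rw [hAd, Matrix.diagonal_apply_eq]
        rfl
      rw [← h0]
      rfl
    rw [Finset.sum_congr rfl fun y _ => hMdiag (x, y)] at h
    exact_mod_cast h
  have hβ : ∀ y, ∑ x, (∑ i, p i * c i (x, y)) = β y := by
    intro y
    have h : ∑ x, M (x, y) (x, y) = ((β y : ℝ) : ℂ) := by
      have h0 : (ptraceL M) y y = ((β y : ℝ) : ℂ) := by
        rw [hBd, Matrix.diagonal_apply_eq]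
        rfl
      rw [← h0]
      rfl
    rw [Finset.sum_congr rfl fun x _ => hMdiag (x, y)] at h
    exact_mod_cast h
  have hpsum : ∑ i, p i = 1 := by
    have h : ρ.trace = ∑ i, ((p i : ℝ) : ℂ) := by
      conv_lhs => rw [hH.spectral_theorem]
      rw [Unitary.conjStarAlgAut_apply, Matrix.star_eq_conjTranspose, Matrix.trace_mul_cycle, hPst,
        Matrix.one_mul, Matrix.trace_diagonal]
      rfl
    rw [htr] at h
    exact_mod_cast h.symm
  have hp : ∀ i, 0 ≤ p i := fun i => hρ.eigenvalues_nonneg i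
  have hcnn : ∀ i j, 0 ≤ c i j := fun i j => Complex.normSq_nonneg _
  have main := scalar_subadd p c α β hp hpsum hcnn hcrow hccol hα hβ
  rw [vNE, vNE, vNE, dif_pos hH, dif_pos hAH, dif_pos hBH]
  exact main

lemma ptraceL_of_swap {a b : Type*} [Fintype a] [Fintype b]
    (σ : Matrix (a × b) (a × b) ℂ) :
    ptraceL (Matrix.of fun (p q : b × a) => σ p.swap q.swap) = ptraceR σ := rfl

lemma vNE_of_swap {a b : Type*} [Fintype a] [Fintype b] [DecidableEq a] [DecidableEq b]
    (σ : Matrix (a × b) (a × b) ℂ) :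
    vNE (Matrix.of fun (p q : b × a) => σ p.swap q.swap) = vNE σ := by
  have h : (Matrix.of fun (p q : b × a) => σ p.swap q.swap)
      = σ.submatrix ⇑(Equiv.prodComm b a) ⇑(Equiv.prodComm b a) := rfl
  rw [h, vNE_submatrix]


end Aux

/-- **On three sites, 2-body weak monotonicity implies all 2-body MED constraints**: for a
pairwise locally consistent family of two-body density operators `ρ i j` on `ℂ^d ⊗ ℂ^d`
(first factor: site `i`, second: site `j`, with swap symmetry), if `S(i|j) + S(i|k) ≥ 0` for
all distinct `i,j,k`, then `S(i) + S(j|i) + S(k|j) ≥ 0` and `S(i) + S(j|i) + S(k|i) ≥ 0`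
for all distinct `i,j,k`. -/
theorem wm_implies_med_three_sites {d : ℕ} (hd : 0 < d)
    (ρ : Fin 3 → Fin 3 → Matrix (Fin d × Fin d) (Fin d × Fin d) ℂ)
    (hdens : ∀ i j, i ≠ j → IsDensityOp (ρ i j))
    (hsym : ∀ i j, i ≠ j → ρ j i = Matrix.of fun p q => ρ i j p.swap q.swap)
    (hcons : ∀ i j k, i ≠ j → i ≠ k → ptraceR (ρ i j) = ptraceR (ρ i k))
    (hWM : ∀ i j k : Fin 3, i ≠ j → i ≠ k → j ≠ k →
      0 ≤ (vNE (ρ i j) - vNE (ptraceL (ρ i j))) + (vNE (ρ i k) - vNE (ptraceL (ρ i k)))) :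
    ∀ i j k : Fin 3, i ≠ j → i ≠ k → j ≠ k →
      (0 ≤ vNE (ptraceR (ρ i j)) + (vNE (ρ j i) - vNE (ptraceL (ρ j i)))
        + (vNE (ρ k j) - vNE (ptraceL (ρ k j))))
      ∧ (0 ≤ vNE (ptraceR (ρ i j)) + (vNE (ρ j i) - vNE (ptraceL (ρ j i)))
        + (vNE (ρ k i) - vNE (ptraceL (ρ k i)))) := by
  intro i j k hij hik hjk
  have eq1 : vNE (ptraceL (ρ j i)) = vNE (ptraceR (ρ i j)) := by
    rw [hsym i j hij, ptraceL_of_swap]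
  have eq2 : vNE (ptraceL (ρ k j)) = vNE (ptraceR (ρ j i)) := by
    rw [hsym j k hjk, ptraceL_of_swap, hcons j k i hjk hij.symm]
  have eq3 : vNE (ptraceL (ρ k i)) = vNE (ptraceR (ρ i j)) := by
    rw [hsym i k hik, ptraceL_of_swap, hcons i k j hik hij]
  have eq4 : vNE (ptraceL (ρ i j)) = vNE (ptraceR (ρ j i)) := by
    rw [hsym j i hij.symm, ptraceL_of_swap]
  have eq5 : vNE (ptraceL (ρ i k)) = vNE (ptraceR (ρ k i)) := by
    rw [hsym k i hik.symm, ptraceL_of_swap]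
  have eq6 : vNE (ptraceL (ρ j k)) = vNE (ptraceR (ρ k i)) := by
    rw [hsym k j hjk.symm, ptraceL_of_swap, hcons k j i hjk.symm hik.symm]
  have eq7 : vNE (ρ i j) = vNE (ρ j i) := by
    rw [hsym j i hij.symm, vNE_of_swap]
  have eq8 : vNE (ρ j k) = vNE (ρ k j) := by
    rw [hsym k j hjk.symm, vNE_of_swap]
  have eq9 : vNE (ρ i k) = vNE (ρ k i) := by
    rw [hsym k i hik.symm, vNE_of_swap]
  have eq10 : vNE (ptraceR (ρ k j)) = vNE (ptraceR (ρ k i)) := by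
    rw [hcons k j i hjk.symm hik.symm]
  have W_i := hWM i j k hij hik hjk
  have W_j := hWM j i k hij.symm hjk hik
  have W_k := hWM k i j hik.symm hjk.symm hij
  have SA_ki := vNE_subadd (ρ k i) (hdens k i hik.symm).1 (hdens k i hik.symm).2
  have SA_kj := vNE_subadd (ρ k j) (hdens k j hjk.symm).1 (hdens k j hjk.symm).2
  constructor
  · linarith [eq1, eq2, eq3, eq4, eq5, eq6, eq7, eq8, eq9, eq10, W_i, W_j, W_k, SA_ki, SA_kj]
  · linarith [eq1, eq2, eq3, eq4, eq5, eq6, eq7, eq8, eq9, eq10, W_i, W_j, W_k, SA_ki, SA_kj]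


end
end
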